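/- Let $f: \mathbb{D} \to M_n(\mathbb{C})^d$ be analytic with $f(0) = 0$, and suppose $\rho(f(z)) < 1$ for every $z$ in the open unit disc $\mathbb{D}$, where $\rho$ is the joint spectral radius. Then $\rho(f(z)) \le |z|$ for all $z \in \mathbb{D}$, and $\rho(f'(0)) \le 1$. -/

import Mathlib

open scoped Matrix ComplexOrder Matrix.Norms.L2Operator

set_option synthInstance.maxHeartbeats 1000000
set_option maxHeartbeats 1000000

/-- The completely positive map `Ψ_X(T) = ∑ⱼ Xⱼ T Xⱼ*` associated to a `d`-tuple of matrices. -/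
noncomputable def Psi {d : ℕ} {N : Type*} [Fintype N] [DecidableEq N]
    (X : Fin d → Matrix N N ℂ) (T : Matrix N N ℂ) : Matrix N N ℂ :=
  ∑ j, X j * T * (X j)ᴴ

/-- The joint spectral radius `ρ(X) = lim_k ‖Ψ_X^k(I)‖^(1/(2k))`. -/
noncomputable def jsr {d : ℕ} {N : Type*} [Fintype N] [DecidableEq N]
    (X : Fin d → Matrix N N ℂ) : ℝ :=
  Filter.limsup (fun k : ℕ => ‖(Psi X)^[k] 1‖ ^ (1 / (2 * (k : ℝ)))) Filter.atTop

namespace JsrSchwarz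
open Filter Metric Matrix Topology

variable {d n m : ℕ}

/-! ### Positive semidefiniteness and the L2 operator norm -/

lemma star_dp (A : Matrix (Fin m) (Fin m) ℂ) (hA : A.IsHermitian) (x : Fin m → ℂ) :
    star (star x ⬝ᵥ A *ᵥ x) = star x ⬝ᵥ A *ᵥ x :=
  calc star (star x ⬝ᵥ A *ᵥ x) = star (star (star (A *ᵥ x) ⬝ᵥ x)) := by
        rw [Matrix.star_dotProduct]
    _ = star (A *ᵥ x) ⬝ᵥ x := star_star _
    _ = (star x ᵥ* Aᴴ) ⬝ᵥ x := by rw [Matrix.star_mulVec]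
    _ = star x ⬝ᵥ (Aᴴ *ᵥ x) := (Matrix.dotProduct_mulVec _ _ _).symm
    _ = star x ⬝ᵥ A *ᵥ x := by rw [hA.eq]

lemma isPositive_toEuclideanCLM_iff {A : Matrix (Fin m) (Fin m) ℂ} :
    (Matrix.toEuclideanCLM (𝕜 := ℂ) A).IsPositive ↔ A.PosSemidef := by
  rw [← ContinuousLinearMap.isPositive_toLinearMap_iff, Matrix.coe_toEuclideanCLM_eq_toEuclideanLin,
    Matrix.isPositive_toEuclideanLin_iff]

/-- monotonicity of the L2 operator norm w.r.t. the Loewner order -/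
lemma norm_le_norm_psd {A B : Matrix (Fin m) (Fin m) ℂ} (hA : A.PosSemidef)
    (hBA : (B - A).PosSemidef) : ‖A‖ ≤ ‖B‖ := by
  rw [Matrix.cstar_norm_def, Matrix.cstar_norm_def]
  refine CStarAlgebra.norm_le_norm_of_nonneg_of_le ?_ ?_
  · rw [ContinuousLinearMap.nonneg_iff_isPositive]
    exact isPositive_toEuclideanCLM_iff.mpr hA
  · rw [ContinuousLinearMap.le_def, ← map_sub]
    exact isPositive_toEuclideanCLM_iff.mpr hBA

/-- a PSD matrix is dominated by its norm times the identity -/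
lemma psd_le_norm_one {A : Matrix (Fin m) (Fin m) ℂ} (hA : A.PosSemidef) :
    ((‖A‖ : ℂ) • 1 - A).PosSemidef := by
  rw [← isPositive_toEuclideanCLM_iff, map_sub, _root_.map_smul, _root_.map_one,
    ← ContinuousLinearMap.le_def]
  have h1 := IsSelfAdjoint.le_algebraMap_norm_self
    (a := Matrix.toEuclideanCLM (𝕜 := ℂ) A)
    ((isPositive_toEuclideanCLM_iff.mpr hA).isSelfAdjoint)
  have : algebraMap ℝ (EuclideanSpace ℂ (Fin m) →L[ℂ] EuclideanSpace ℂ (Fin m))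
      ‖Matrix.toEuclideanCLM (𝕜 := ℂ) A‖ = (‖A‖ : ℂ) • 1 := by
    rw [Algebra.algebraMap_eq_smul_one, ← Matrix.cstar_norm_def]
    exact (algebraMap_smul ℂ ‖A‖
      (1 : EuclideanSpace ℂ (Fin m) →L[ℂ] EuclideanSpace ℂ (Fin m))).symm
  rwa [this] at h1

/-! ### Basic properties of `Psi` and of the norm sequence `u` -/

variable {X : Fin d → Matrix (Fin n) (Fin n) ℂ}

lemma psi_sub (A B : Matrix (Fin n) (Fin n) ℂ) :
    Psi X (A - B) = Psi X A - Psi X B := by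
  simp [Psi, Matrix.mul_sub, Matrix.sub_mul, Finset.sum_sub_distrib]

lemma psi_smul (c : ℂ) (A : Matrix (Fin n) (Fin n) ℂ) :
    Psi X (c • A) = c • Psi X A := by
  simp [Psi, Matrix.mul_smul, Matrix.smul_mul, Finset.smul_sum]

lemma psi_iter_sub (k : ℕ) (A B : Matrix (Fin n) (Fin n) ℂ) :
    (Psi X)^[k] (A - B) = (Psi X)^[k] A - (Psi X)^[k] B := by
  induction k generalizing A B with
  | zero => simp
  | succ k ih => simp [Function.iterate_succ_apply, psi_sub, ih]

lemma psi_iter_smul (k : ℕ) (c : ℂ) (A : Matrix (Fin n) (Fin n) ℂ) :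
    (Psi X)^[k] (c • A) = c • (Psi X)^[k] A := by
  induction k generalizing A with
  | zero => simp
  | succ k ih => simp [Function.iterate_succ_apply, psi_smul, ih]

lemma psi_psd {A : Matrix (Fin n) (Fin n) ℂ} (hA : A.PosSemidef) : (Psi X A).PosSemidef := by
  unfold Psi
  refine Finset.sum_induction _ _ (fun a b ha hb => ha.add hb) Matrix.PosSemidef.zero ?_
  exact fun j _ => hA.mul_mul_conjTranspose_same (X j)

lemma psi_iter_psd {A : Matrix (Fin n) (Fin n) ℂ} (hA : A.PosSemidef) (k : ℕ) :
    ((Psi X)^[k] A).PosSemidef := by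
  induction k generalizing A with
  | zero => simpa
  | succ k ih => rw [Function.iterate_succ_apply]; exact ih (psi_psd hA)

/-- the norm sequence -/
noncomputable def u {d n : ℕ} (X : Fin d → Matrix (Fin n) (Fin n) ℂ) (k : ℕ) : ℝ :=
  ‖(Psi X)^[k] 1‖

lemma u_nonneg (k : ℕ) : 0 ≤ u X k := norm_nonneg _

lemma psi_iter_mono (k : ℕ) {A B : Matrix (Fin n) (Fin n) ℂ} (h : (B - A).PosSemidef) :
    ((Psi X)^[k] B - (Psi X)^[k] A).PosSemidef := by
  rw [← psi_iter_sub]; exact psi_iter_psd h k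

lemma u_add_le (a b : ℕ) : u X (a + b) ≤ u X a * u X b := by
  have h1 : (Psi X)^[a + b] 1 = (Psi X)^[a] ((Psi X)^[b] 1) :=
    Function.iterate_add_apply _ _ _ _
  have hpsd : ((Psi X)^[b] 1).PosSemidef := psi_iter_psd Matrix.PosSemidef.one b
  have hle : (((u X b : ℂ) • (1 : Matrix (Fin n) (Fin n) ℂ)) - (Psi X)^[b] 1).PosSemidef :=
    psd_le_norm_one hpsd
  have h2 := psi_iter_mono (X := X) a hle
  rw [psi_iter_smul] at h2
  have h3 : ‖(Psi X)^[a] ((Psi X)^[b] 1)‖ ≤ ‖(u X b : ℂ) • (Psi X)^[a] 1‖ :=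
    norm_le_norm_psd (psi_iter_psd hpsd a) h2
  rw [norm_smul] at h3
  rw [u, h1]
  calc ‖(Psi X)^[a] ((Psi X)^[b] 1)‖ ≤ ‖(u X b : ℂ)‖ * ‖(Psi X)^[a] 1‖ := h3
    _ = u X a * u X b := by
        rw [Complex.norm_real, Real.norm_of_nonneg (u_nonneg b)]; exact mul_comm _ _

lemma u_zero_le_one : u X 0 ≤ 1 := by
  show ‖(1 : Matrix (Fin n) (Fin n) ℂ)‖ ≤ 1
  rw [Matrix.cstar_norm_def, _root_.map_one]
  exact ContinuousLinearMap.norm_id_le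

lemma u_mul_le (q k : ℕ) : u X (k * q) ≤ (u X k) ^ q := by
  induction q with
  | zero => simpa [u] using u_zero_le_one (X := X)
  | succ q ih =>
      calc u X (k * (q + 1)) = u X (k * q + k) := by ring_nf
        _ ≤ u X (k * q) * u X k := u_add_le _ _
        _ ≤ (u X k) ^ q * u X k := by
            exact mul_le_mul_of_nonneg_right ih (u_nonneg k)
        _ = (u X k) ^ (q + 1) := by ring

/-! ### Properties of the `jsr` sequence -/

/-- the sequence whose limsup is the jsr -/
noncomputable def aseq {d n : ℕ} (X : Fin d → Matrix (Fin n) (Fin n) ℂ) (k : ℕ) : ℝ :=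
  u X k ^ (1 / (2 * (k : ℝ)))

lemma jsr_eq : jsr X = Filter.limsup (aseq X) Filter.atTop := rfl

lemma aseq_nonneg (k : ℕ) : 0 ≤ aseq X k := Real.rpow_nonneg (u_nonneg k) _

lemma aseq_le (k : ℕ) (hk : 1 ≤ k) : aseq X k ≤ (u X 1) ^ ((1:ℝ)/2) := by
  have h1 : u X k ≤ (u X 1) ^ k := by simpa using u_mul_le k 1
  have h2 : aseq X k ≤ ((u X 1) ^ k) ^ (1 / (2 * (k:ℝ))) :=
    Real.rpow_le_rpow (u_nonneg k) h1 (by positivity)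
  refine h2.trans (le_of_eq ?_)
  rw [← Real.rpow_natCast (u X 1) k, ← Real.rpow_mul (u_nonneg 1)]
  congr 1
  have : (k : ℝ) ≠ 0 := Nat.cast_ne_zero.mpr (by omega)
  field_simp

lemma aseq_bddAbove : IsBoundedUnder (· ≤ ·) atTop (aseq X) := by
  refine ⟨max 1 ((u X 1) ^ ((1:ℝ)/2)), ?_⟩
  rw [Filter.eventually_map]
  filter_upwards [Filter.eventually_ge_atTop 1] with k hk
  exact (aseq_le k hk).trans (le_max_right _ _)

lemma aseq_cobdd : IsCoboundedUnder (· ≤ ·) atTop (aseq X) :=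
  Filter.isCoboundedUnder_le_of_eventually_le atTop
    (Filter.Eventually.of_forall fun k => aseq_nonneg k)

lemma psi_zero_mat : Psi X 0 = 0 := by simp [Psi]

lemma psi_iter_zero (k : ℕ) : (Psi X)^[k] 0 = 0 := by
  induction k with
  | zero => simp
  | succ k ih => rw [Function.iterate_succ_apply, psi_zero_mat, ih]

/-- The key consequence of submultiplicativity: the limsup is bounded by each root. -/
lemma jsr_le_u (k : ℕ) (hk : 1 ≤ k) : jsr X ≤ (u X k) ^ (1 / (2 * (k:ℝ))) := by
  rcases eq_or_lt_of_le (u_nonneg (X := X) k) with h0 | hu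
  · have hzero : (Psi X)^[k] 1 = 0 := by
      have : ‖(Psi X)^[k] 1‖ = 0 := h0.symm
      simpa using this
    have hev : ∀ m, k ≤ m → aseq X m = 0 := by
      intro m hm
      have : (Psi X)^[m] 1 = 0 := by
        have h1 : (Psi X)^[m - k + k] 1 = (Psi X)^[m - k] ((Psi X)^[k] 1) :=
          Function.iterate_add_apply _ _ _ _
        rw [Nat.sub_add_cancel hm] at h1
        rw [h1, hzero, psi_iter_zero]
      rw [aseq, u, this, norm_zero]
      have hmR : (0:ℝ) < m := by
        exact_mod_cast Nat.lt_of_lt_of_le Nat.zero_lt_one (hk.trans hm)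
      exact Real.zero_rpow (by positivity)
    have hres : jsr X = 0 := by
      rw [jsr_eq]
      have : limsup (aseq X) atTop = limsup (fun _ : ℕ => (0:ℝ)) atTop := by
        apply Filter.limsup_congr
        filter_upwards [Filter.eventually_ge_atTop k] with m hm using hev m hm
      rw [this, Filter.limsup_const]
    rw [hres, ← h0]
    rw [Real.zero_rpow (by positivity)]
  · have hkR : (0:ℝ) < k := by exact_mod_cast hk
    have hne : (Finset.range k).Nonempty := Finset.nonempty_range_iff.mpr (by omega)
    set C : ℝ := max 1 ((Finset.range k).sup' hne (u X)) with hCdef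
    have hC1 : 1 ≤ C := le_max_left _ _
    have hC0 : 0 < C := lt_of_lt_of_le one_pos hC1
    have hCb : ∀ s, s < k → u X s ≤ C := fun s hs =>
      le_max_of_le_right (Finset.le_sup' (u X) (Finset.mem_range.mpr hs))
    have hkey : ∀ m : ℕ, u X m ≤ (u X k) ^ (m / k) * C := by
      intro m
      have hsplit : u X (k * (m / k) + m % k) ≤ u X (k * (m / k)) * u X (m % k) :=
        u_add_le _ _
      rw [Nat.div_add_mod m k] at hsplit
      refine hsplit.trans ?_
      exact mul_le_mul (u_mul_le _ _) (hCb _ (Nat.mod_lt _ (by omega)))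
        (u_nonneg _) (by positivity)
    set b : ℕ → ℝ := fun m =>
      (u X k) ^ (((m / k : ℕ) : ℝ) / (2 * (m:ℝ))) * C ^ (1 / (2 * (m:ℝ))) with hbdef
    have hab : ∀ m, 1 ≤ m → aseq X m ≤ b m := by
      intro m hm
      have hmR : (0:ℝ) < m := by exact_mod_cast hm
      have h1 : aseq X m ≤ ((u X k) ^ (m / k) * C) ^ (1 / (2 * (m:ℝ))) :=
        Real.rpow_le_rpow (u_nonneg m) (hkey m) (by positivity)
      refine h1.trans (le_of_eq ?_)
      rw [Real.mul_rpow (by positivity) (by positivity)]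
      congr 1
      rw [← Real.rpow_natCast (u X k) (m / k), ← Real.rpow_mul (u_nonneg k)]
      congr 1
      field_simp
    have hbtend : Tendsto b atTop (𝓝 ((u X k) ^ (1 / (2 * (k:ℝ))))) := by
      have he : Tendsto (fun m : ℕ => ((m / k : ℕ) : ℝ) / (2 * (m:ℝ))) atTop
          (𝓝 (1 / (2 * (k:ℝ)))) := by
        have hlow : ∀ᶠ m : ℕ in atTop,
            1 / (2 * (k:ℝ)) - 1 / (2 * (m:ℝ)) ≤ ((m / k : ℕ) : ℝ) / (2 * (m:ℝ)) := by
          filter_upwards [Filter.eventually_ge_atTop 1] with m hm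
          have hmR : (0:ℝ) < m := by exact_mod_cast hm
          have hdm : k * (m / k) + m % k = m := Nat.div_add_mod m k
          have hmod : (m % k : ℕ) < k := Nat.mod_lt _ (by omega)
          have hq : (m:ℝ) - k ≤ (k:ℝ) * ((m / k : ℕ) : ℝ) := by
            have hdm' : ((k * (m/k) + m % k : ℕ) : ℝ) = (m:ℝ) := by
              exact_mod_cast congrArg (fun x : ℕ => (x:ℝ)) hdm
            push_cast at hdm'
            have hmod' : ((m % k : ℕ):ℝ) < k := by exact_mod_cast hmod
            linarith
          have hstep : 1 / (2*(k:ℝ)) ≤ (((m / k : ℕ) : ℝ) + 1) / (2 * (m:ℝ)) := by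
            rw [div_le_div_iff₀ (by positivity) (by positivity)]
            nlinarith
          have hsplit : (((m / k : ℕ) : ℝ) + 1) / (2 * (m:ℝ))
              = ((m / k : ℕ) : ℝ) / (2 * (m:ℝ)) + 1 / (2 * (m:ℝ)) := add_div _ _ _
          linarith [hstep, hsplit.le]
        have hhigh : ∀ᶠ m : ℕ in atTop,
            ((m / k : ℕ) : ℝ) / (2 * (m:ℝ)) ≤ 1 / (2 * (k:ℝ)) := by
          filter_upwards [Filter.eventually_ge_atTop 1] with m hm
          have hmR : (0:ℝ) < m := by exact_mod_cast hm
          have hq : (k:ℝ) * ((m / k : ℕ) : ℝ) ≤ (m:ℝ) := by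
            exact_mod_cast Nat.cast_le.mpr (by exact (Nat.mul_div_le m k))
          rw [div_le_div_iff₀ (by positivity) (by positivity)]
          nlinarith
        have htail : Tendsto (fun m : ℕ => 1 / (2 * (k:ℝ)) - 1 / (2 * (m:ℝ))) atTop
            (𝓝 (1 / (2 * (k:ℝ)))) := by
          have h2 : Tendsto (fun m : ℕ => 1 / (2 * (m:ℝ))) atTop (𝓝 0) := by
            have : (fun m : ℕ => 1 / (2 * (m:ℝ))) = fun m : ℕ => (1 / (m:ℝ)) * (1/2) := by
              funext m
              rw [one_div, one_div, mul_inv]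
              ring
            rw [this]
            simpa using tendsto_one_div_atTop_nhds_zero_nat.mul_const (1/2 : ℝ)
          simpa using (tendsto_const_nhds (x := 1 / (2 * (k:ℝ))) (f := atTop)).sub h2
        exact tendsto_of_tendsto_of_tendsto_of_le_of_le' htail tendsto_const_nhds hlow hhigh
      have h1 : Tendsto (fun m : ℕ => (u X k) ^ (((m / k : ℕ) : ℝ) / (2 * (m:ℝ)))) atTop
          (𝓝 ((u X k) ^ (1 / (2 * (k:ℝ))))) :=
        Filter.Tendsto.rpow tendsto_const_nhds he (Or.inl (ne_of_gt hu))
      have h2 : Tendsto (fun m : ℕ => C ^ (1 / (2 * (m:ℝ)))) atTop (𝓝 1) := by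
        have h2' : Tendsto (fun m : ℕ => 1 / (2 * (m:ℝ))) atTop (𝓝 0) := by
          have : (fun m : ℕ => 1 / (2 * (m:ℝ))) = fun m : ℕ => (1 / (m:ℝ)) * (1/2) := by
            funext m; rw [one_div, one_div, mul_inv]; ring
          rw [this]
          simpa using tendsto_one_div_atTop_nhds_zero_nat.mul_const (1/2 : ℝ)
        have := Filter.Tendsto.rpow (tendsto_const_nhds (x := C) (f := atTop)) h2'
          (Or.inl (ne_of_gt hC0))
        simpa using this
      have hm12 := h1.mul h2
      simp only [mul_one] at hm12
      exact hm12
    rw [jsr_eq]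
    calc limsup (aseq X) atTop ≤ limsup b atTop := by
          apply Filter.limsup_le_limsup ?_ aseq_cobdd hbtend.isBoundedUnder_le
          filter_upwards [Filter.eventually_ge_atTop 1] with m hm using hab m hm
      _ = _ := hbtend.limsup_eq

/-! ### Homogeneity of the jsr -/

lemma psi_smul_tuple (c : ℂ) (T : Matrix (Fin n) (Fin n) ℂ) :
    Psi (c • X) T = (c * (starRingEnd ℂ) c) • Psi X T := by
  unfold Psi
  rw [Finset.smul_sum]
  refine Finset.sum_congr rfl fun j _ => ?_
  simp only [Pi.smul_apply, Matrix.conjTranspose_smul, Matrix.smul_mul, Matrix.mul_smul]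
  rw [smul_smul, mul_comm]
  rfl

lemma psi_iter_smul_tuple (c : ℂ) (k : ℕ) :
    (Psi (c • X))^[k] 1 = ((c * (starRingEnd ℂ) c) ^ k) • (Psi X)^[k] 1 := by
  induction k with
  | zero => simp
  | succ k ih =>
      rw [Function.iterate_succ_apply', ih, psi_smul, psi_smul_tuple,
        Function.iterate_succ_apply', smul_smul, pow_succ, mul_comm]

lemma u_smul_tuple (c : ℂ) (k : ℕ) :
    u (c • X) k = (‖c‖) ^ (2 * k) * u X k := by
  rw [u, psi_iter_smul_tuple, norm_smul, u]
  congr 1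
  rw [norm_pow, Complex.mul_conj]
  rw [Complex.norm_real]
  rw [Real.norm_of_nonneg (Complex.normSq_nonneg c)]
  rw [← Complex.sq_norm, pow_mul]

lemma aseq_smul_tuple (c : ℂ) (k : ℕ) (hk : 1 ≤ k) :
    aseq (c • X) k = ‖c‖ * aseq X k := by
  have hkR : (0:ℝ) < k := by exact_mod_cast hk
  rw [aseq, aseq, u_smul_tuple,
    Real.mul_rpow (by positivity) (u_nonneg k)]
  congr 1
  rw [← Real.rpow_natCast (‖c‖) (2 * k), ← Real.rpow_mul (norm_nonneg c)]
  have : ((2 * k : ℕ) : ℝ) * (1 / (2 * (k:ℝ))) = 1 := by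
    push_cast
    field_simp
  rw [this, Real.rpow_one]

lemma jsr_smul_tuple (c : ℂ) : jsr (c • X) = ‖c‖ * jsr X := by
  rw [jsr_eq, jsr_eq]
  have h1 : limsup (aseq (c • X)) atTop
      = limsup (fun k => ‖c‖ * aseq X k) atTop := by
    apply Filter.limsup_congr
    filter_upwards [Filter.eventually_ge_atTop 1] with k hk using aseq_smul_tuple c k hk
  rw [h1]
  have hmono : Monotone (fun x : ℝ => ‖c‖ * x) := fun a b hab =>
    mul_le_mul_of_nonneg_left hab (norm_nonneg c)
  have := hmono.map_limsup_of_continuousAt (F := atTop) (a := aseq X)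
    (by exact (continuous_const.mul continuous_id).continuousAt) aseq_bddAbove aseq_cobdd
  rw [Function.comp_def] at this
  exact this.symm

/-! ### Word products and the row matrix -/

/-- the product of matrices along a word -/
noncomputable def wProd (X : Fin d → Matrix (Fin n) (Fin n) ℂ) {k : ℕ}
    (w : Fin k → Fin d) : Matrix (Fin n) (Fin n) ℂ :=
  (List.ofFn fun i => X (w i)).prod

lemma wProd_zero (w : Fin 0 → Fin d) : wProd X w = 1 := by simp [wProd]

lemma wProd_cons {k : ℕ} (j : Fin d) (w : Fin k → Fin d) :
    wProd X (Fin.cons j w) = X j * wProd X w := by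
  rw [wProd, List.ofFn_succ]
  simp [wProd]

lemma psi_iter_eq_sum (k : ℕ) :
    (Psi X)^[k] 1 = ∑ w : Fin k → Fin d, wProd X w * (wProd X w)ᴴ := by
  induction k with
  | zero => simp [wProd_zero]
  | succ k ih =>
      rw [Function.iterate_succ_apply', ih]
      rw [← ((Fin.consEquiv (fun _ : Fin (k+1) => Fin d)).sum_comp
        (fun w => wProd X w * (wProd X w)ᴴ))]
      rw [Fintype.sum_prod_type]
      unfold Psi
      refine Finset.sum_congr rfl fun j _ => ?_
      rw [Finset.mul_sum, Finset.sum_mul]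
      refine Finset.sum_congr rfl fun w _ => ?_
      have hc : (Fin.consEquiv (fun _ : Fin (k+1) => Fin d)) (j, w) = Fin.cons j w := rfl
      rw [hc, wProd_cons, Matrix.conjTranspose_mul]
      noncomm_ring

/-- the row matrix of all word products -/
noncomputable def Bmat (X : Fin d → Matrix (Fin n) (Fin n) ℂ) (k : ℕ) :
    Matrix (Fin n) ((Fin k → Fin d) × Fin n) ℂ :=
  Matrix.of fun i p => wProd X p.1 i p.2

lemma Bmat_mul_conjTranspose (k : ℕ) :
    Bmat X k * (Bmat X k)ᴴ = (Psi X)^[k] 1 := by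
  rw [psi_iter_eq_sum]
  ext i i'
  rw [Matrix.mul_apply, Matrix.sum_apply, Fintype.sum_prod_type]
  refine Finset.sum_congr rfl fun w _ => ?_
  rw [Matrix.mul_apply]
  refine Finset.sum_congr rfl fun j _ => ?_
  rw [Matrix.conjTranspose_apply, Matrix.conjTranspose_apply]
  rfl

lemma u_eq_sq_norm_Bmat (k : ℕ) : u X k = ‖Bmat X k‖ * ‖Bmat X k‖ := by
  rw [u, ← Bmat_mul_conjTranspose]
  have h := Matrix.l2_opNorm_conjTranspose_mul_self (Bmat X k)ᴴ
  rw [Matrix.conjTranspose_conjTranspose, Matrix.l2_opNorm_conjTranspose] at h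
  exact h

lemma wProd_smul (c : ℂ) {k : ℕ} (w : Fin k → Fin d) :
    wProd (c • X) w = c ^ k • wProd X w := by
  induction k with
  | zero => simp [wProd_zero]
  | succ k ih =>
      have h1 : (Fin.cons (w 0) (Fin.tail w) : Fin (k+1) → Fin d) = w := Fin.cons_self_tail w
      rw [← h1, wProd_cons, wProd_cons, ih]
      simp only [Pi.smul_apply, Matrix.smul_mul, Matrix.mul_smul, smul_smul, pow_succ]

lemma Bmat_smul (c : ℂ) (k : ℕ) : Bmat (c • X) k = c ^ k • Bmat X k := by
  ext i p
  rw [Bmat, Matrix.of_apply, wProd_smul]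
  rfl

/-! ### Differentiability of the row matrix -/

section Diff

variable {g : ℂ → (Fin d → Matrix (Fin n) (Fin n) ℂ)} {s : Set ℂ}

lemma differentiableOn_wProd (hg : DifferentiableOn ℂ g s) :
    ∀ {k : ℕ} (w : Fin k → Fin d), DifferentiableOn ℂ (fun z => wProd (g z) w) s := by
  intro k
  induction k with
  | zero => intro w; simp only [wProd_zero]; exact differentiableOn_const _
  | succ k ih =>
      intro w
      have hrw : (fun z => wProd (g z) w)
          = fun z => (g z (w 0)) * wProd (g z) (Fin.tail w) := by
        funext z
        conv_lhs => rw [← Fin.cons_self_tail w, wProd_cons]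
      rw [hrw]
      have hcomp : DifferentiableOn ℂ (fun z => g z (w 0)) s := by
        exact (ContinuousLinearMap.proj (R := ℂ)
          (φ := fun _ : Fin d => Matrix (Fin n) (Fin n) ℂ)
          (w 0)).differentiable.comp_differentiableOn hg
      exact hcomp.mul (ih (Fin.tail w))

/-- rearranging a family of word products into the row matrix, as a linear map -/
noncomputable def Lmap (d n k : ℕ) : ((Fin k → Fin d) → Matrix (Fin n) (Fin n) ℂ) →ₗ[ℂ]
    Matrix (Fin n) ((Fin k → Fin d) × Fin n) ℂ where
  toFun M := Matrix.of fun i p => M p.1 i p.2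
  map_add' M M' := by ext i p; simp
  map_smul' c M := by ext i p; simp

lemma differentiableOn_Bmat (hg : DifferentiableOn ℂ g s) (k : ℕ) :
    DifferentiableOn ℂ (fun z => Bmat (g z) k) s := by
  have : (fun z => Bmat (g z) k)
      = (LinearMap.toContinuousLinearMap (Lmap d n k)) ∘ (fun z w => wProd (g z) w) := rfl
  rw [this]
  refine (LinearMap.toContinuousLinearMap (Lmap d n k)).differentiable.comp_differentiableOn ?_
  exact differentiableOn_pi.mpr fun w => differentiableOn_wProd hg w

end Diff

/-! ### A uniform bound via compactness, and the maximum principle -/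

lemma u_lt_one_mono {a b : ℕ} (hab : a ∣ b) (hb : 1 ≤ b) (h : u X a < 1) :
    u X b < 1 := by
  obtain ⟨q, rfl⟩ := hab
  have hq : q ≠ 0 := by rintro rfl; omega
  exact lt_of_le_of_lt (u_mul_le q a)
    (pow_lt_one₀ (u_nonneg a) h hq)

lemma exists_uniform_k {f : ℂ → (Fin d → Matrix (Fin n) (Fin n) ℂ)}
    (hf : DifferentiableOn ℂ f (ball 0 1))
    (hρ : ∀ z ∈ ball (0 : ℂ) 1, jsr (f z) < 1)
    {r : ℝ} (hr0 : 0 < r) (hr1 : r < 1) :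
    ∃ k, 1 ≤ k ∧ ∀ ζ ∈ closedBall (0:ℂ) r, u (f ζ) k ≤ 1 := by
  set U : ℕ → Set ℂ := fun j => ball (0:ℂ) 1 ∩
    {ζ | u (f ζ) (Nat.factorial (j+1)) < 1} with hU
  have hUopen : ∀ j, IsOpen (U j) := by
    intro j
    have hcont : ContinuousOn (fun ζ => u (f ζ) (Nat.factorial (j+1))) (ball (0:ℂ) 1) := by
      have h1 := (differentiableOn_Bmat hf (Nat.factorial (j+1))).continuousOn
      have h2 : ContinuousOn (fun ζ => ‖Bmat (f ζ) (Nat.factorial (j+1))‖) (ball (0:ℂ) 1) :=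
        h1.norm
      have : (fun ζ => u (f ζ) (Nat.factorial (j+1)))
          = fun ζ => ‖Bmat (f ζ) (Nat.factorial (j+1))‖
            * ‖Bmat (f ζ) (Nat.factorial (j+1))‖ := by
        funext ζ; exact u_eq_sq_norm_Bmat _
      rw [this]
      exact h2.mul h2
    exact hcont.isOpen_inter_preimage isOpen_ball isOpen_Iio
  have hUmono : ∀ {j j' : ℕ}, j ≤ j' → U j ⊆ U j' := by
    intro j j' hjj ζ hζ
    refine ⟨hζ.1, ?_⟩
    exact u_lt_one_mono (Nat.factorial_dvd_factorial (by omega)) (Nat.factorial_pos _) hζ.2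
  have hcover : closedBall (0:ℂ) r ⊆ ⋃ j, U j := by
    intro ζ hζ
    have hζ1 : ζ ∈ ball (0:ℂ) 1 := lt_of_le_of_lt (mem_closedBall.mp hζ) hr1
    have hjsr := hρ ζ hζ1
    rw [jsr_eq] at hjsr
    have hev : ∀ᶠ k in atTop, aseq (f ζ) k < 1 :=
      Filter.eventually_lt_of_limsup_lt hjsr aseq_bddAbove
    obtain ⟨k₀, hk₀, hk₀1⟩ := (hev.and (Filter.eventually_ge_atTop 1)).exists
    have huk : u (f ζ) k₀ < 1 := by
      by_contra hge
      push_neg at hge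
      have : (1:ℝ) ≤ aseq (f ζ) k₀ := by
        rw [aseq]
        exact Real.one_le_rpow hge (by positivity)
      linarith
    refine Set.mem_iUnion.mpr ⟨k₀, hζ1, ?_⟩
    exact u_lt_one_mono (Nat.dvd_factorial (by omega) (by omega)) (Nat.factorial_pos _) huk
  obtain ⟨t, ht⟩ := (isCompact_closedBall (0:ℂ) r).elim_finite_subcover U hUopen hcover
  refine ⟨Nat.factorial (t.sup id + 1), Nat.one_le_iff_ne_zero.mpr (Nat.factorial_pos _).ne', ?_⟩
  intro ζ hζ
  obtain ⟨j, hjt, hζj⟩ := Set.mem_iUnion₂.mp (ht hζ)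
  have : ζ ∈ U (t.sup id) := hUmono (Finset.le_sup (f := id) hjt) hζj
  exact this.2.le

lemma maxmod_Bmat {g : ℂ → (Fin d → Matrix (Fin n) (Fin n) ℂ)}
    (hg : DifferentiableOn ℂ g (ball 0 1)) {r M : ℝ} (k : ℕ) (hr0 : 0 < r) (hr1 : r < 1)
    (hbound : ∀ ζ ∈ sphere (0:ℂ) r, ‖Bmat (g ζ) k‖ ≤ M) :
    ∀ z ∈ closedBall (0:ℂ) r, ‖Bmat (g z) k‖ ≤ M := by
  intro z hz
  have hsub : closure (ball (0:ℂ) r) ⊆ ball (0:ℂ) 1 := by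
    rw [closure_ball _ (ne_of_gt hr0)]
    exact closedBall_subset_ball hr1
  have hd : DiffContOnCl ℂ (fun z => Bmat (g z) k) (ball (0:ℂ) r) :=
    ⟨(differentiableOn_Bmat hg k).mono (fun x hx => subset_closure.trans hsub hx),
      ((differentiableOn_Bmat hg k).continuousOn).mono hsub⟩
  refine Complex.norm_le_of_forall_mem_frontier_norm_le isBounded_ball hd ?_ ?_
  · rwa [frontier_ball _ (ne_of_gt hr0)]
  · rw [closure_ball _ (ne_of_gt hr0)]; exact hz

end JsrSchwarz

open JsrSchwarz Filter Metric Matrix Topology in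
/-- Schwarz lemma for the joint spectral radius: if `f : 𝔻 → Mₙ(ℂ)^d` is analytic,
`f(0) = 0`, and `ρ(f(z)) < 1` on the disc, then `ρ(f(z)) ≤ |z|` and `ρ(f'(0)) ≤ 1`. -/
theorem stmt_8 {d n : ℕ} (f : ℂ → (Fin d → Matrix (Fin n) (Fin n) ℂ))
    (hf : DifferentiableOn ℂ f (Metric.ball (0 : ℂ) 1))
    (hf0 : f 0 = 0)
    (hρ : ∀ z ∈ Metric.ball (0 : ℂ) 1, jsr (f z) < 1) :
    (∀ z ∈ Metric.ball (0 : ℂ) 1, jsr (f z) ≤ ‖z‖) ∧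
      jsr (deriv f 0) ≤ 1 := by
  set g : ℂ → (Fin d → Matrix (Fin n) (Fin n) ℂ) := dslope f 0 with hgdef
  have hball : Metric.ball (0 : ℂ) 1 ∈ 𝓝 (0:ℂ) := isOpen_ball.mem_nhds (mem_ball_self one_pos)
  have hg : DifferentiableOn ℂ g (ball 0 1) := (Complex.differentiableOn_dslope hball).mpr hf
  have hfg : ∀ z : ℂ, f z = z • g z := by
    intro z
    have h := sub_smul_dslope f 0 z
    rw [hf0, sub_zero, sub_zero] at h
    exact h.symm
  have hg0 : g 0 = deriv f 0 := dslope_same f 0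
  have key : ∀ z ∈ ball (0:ℂ) 1, jsr (g z) ≤ 1 := by
    intro z hz
    by_contra hlt
    push_neg at hlt
    have hjpos : 0 < jsr (g z) := lt_trans one_pos hlt
    have habs : ‖z‖ < 1 := by
      rw [mem_ball, Complex.dist_eq, sub_zero] at hz
      exact hz
    have hmax : max (‖z‖) (1 / jsr (g z)) < 1 := by
      rw [max_lt_iff]
      constructor
      · exact habs
      · rw [div_lt_one hjpos]; exact hlt
    obtain ⟨r, hr1, hr2⟩ := exists_between hmax
    have hr0 : 0 < r := lt_of_lt_of_le (by positivity) ((le_max_right _ _).trans hr1.le)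
    obtain ⟨k, hk1, hkb⟩ := exists_uniform_k hf hρ hr0 hr2
    have hsph : ∀ ζ ∈ sphere (0:ℂ) r, ‖Bmat (g ζ) k‖ ≤ (r ^ k)⁻¹ := by
      intro ζ hζ
      have hζr : ‖ζ‖ = r := by
        rw [mem_sphere, Complex.dist_eq, sub_zero] at hζ
        exact hζ
      have hζball : ζ ∈ closedBall (0:ℂ) r := sphere_subset_closedBall hζ
      have h1 : u (f ζ) k ≤ 1 := hkb ζ hζball
      have h2 : ‖Bmat (f ζ) k‖ ≤ 1 := by
        have h := u_eq_sq_norm_Bmat (X := f ζ) k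
        nlinarith [norm_nonneg (Bmat (f ζ) k)]
      have h3 : Bmat (f ζ) k = ζ ^ k • Bmat (g ζ) k := by
        rw [hfg ζ]; exact Bmat_smul ζ k
      rw [h3, norm_smul, norm_pow, hζr] at h2
      have hpow : (0:ℝ) < r ^ k := by positivity
      calc ‖Bmat (g ζ) k‖ = (r^k)⁻¹ * (r^k * ‖Bmat (g ζ) k‖) := by field_simp
        _ ≤ (r^k)⁻¹ * 1 := mul_le_mul_of_nonneg_left h2 (by positivity)
        _ = (r^k)⁻¹ := mul_one _
    have hin : ∀ w ∈ closedBall (0:ℂ) r, ‖Bmat (g w) k‖ ≤ (r^k)⁻¹ :=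
      maxmod_Bmat hg k hr0 hr2 hsph
    have hz' : z ∈ closedBall (0:ℂ) r := by
      rw [mem_closedBall, Complex.dist_eq, sub_zero]
      exact ((le_max_left _ _).trans hr1.le)
    have h4 : u (g z) k ≤ (r^k)⁻¹ * (r^k)⁻¹ := by
      rw [u_eq_sq_norm_Bmat]
      exact mul_le_mul (hin z hz') (hin z hz') (norm_nonneg _) (by positivity)
    have h5 : jsr (g z) ≤ 1 / r := by
      refine (jsr_le_u k hk1).trans ?_
      have h6 : (u (g z) k) ^ (1 / (2 * (k:ℝ)))
          ≤ ((r^k)⁻¹ * (r^k)⁻¹) ^ (1 / (2 * (k:ℝ))) := by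
        refine Real.rpow_le_rpow ?_ h4 (by positivity)
        rw [u_eq_sq_norm_Bmat]
        positivity
      refine h6.trans (le_of_eq ?_)
      have hkR : (0:ℝ) < (k:ℝ) := by exact_mod_cast hk1
      have : ((r^k)⁻¹ * (r^k)⁻¹ : ℝ) = r ^ (-(2 * (k:ℝ))) := by
        rw [← Real.rpow_natCast r k, ← Real.rpow_neg hr0.le, ← Real.rpow_add hr0]
        ring_nf
      rw [this, ← Real.rpow_mul hr0.le]
      rw [show (-(2 * (k:ℝ))) * (1 / (2 * (k:ℝ))) = -1 by field_simp]
      rw [Real.rpow_neg_one, one_div]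
    have hcontr : jsr (g z) < jsr (g z) := by
      calc jsr (g z) ≤ 1 / r := h5
        _ < jsr (g z) := by
            rw [div_lt_iff₀ hr0]
            have h7 : 1 / jsr (g z) < r := (le_max_right _ _).trans_lt hr1
            rw [div_lt_iff₀ hjpos] at h7
            linarith [mul_comm r (jsr (g z))]
    exact lt_irrefl _ hcontr
  constructor
  · intro z hz
    have h1 := key z hz
    have h2 : jsr (f z) = ‖z‖ * jsr (g z) := by
      rw [hfg z]; exact jsr_smul_tuple z
    rw [h2]
    exact mul_le_of_le_one_right (norm_nonneg z) h1
  · rw [← hg0]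
    exact key 0 (mem_ball_self one_pos)
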